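/- Suppose ρ : M' → L' is an injective homomorphism of nondegenerate integral lattices and M is a finite-index sublattice of M'. If for each prime ℓ dividing disc(M) there is a sublattice L(ℓ) of L' containing ρ(M) such that the induced map M⊗𝔽_ℓ → (L(ℓ)⊗𝔽_ℓ)* is injective, then M = M'. -/

import Mathlib

/-- Suppose `ρ : M' → L'` is an injective homomorphism of nondegenerate integral
lattices and `M` is a finite-index sublattice of `M'`. If for each prime `ℓ`
dividing `disc M` there is a sublattice `L(ℓ)` of `L'` containing `ρ(M)` such that
the induced map `M ⊗ 𝔽_ℓ → (L(ℓ) ⊗ 𝔽_ℓ)*` is injective (expressed elementwise: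
any `x ∈ M` pairing to `0 mod ℓ` with every element of `L(ℓ)` is divisible by `ℓ`
in `M`), then `M = M'`. -/
theorem stmt_10 {M' L' : Type*} [AddCommGroup M'] [Module ℤ M']
    [Module.Free ℤ M'] [Module.Finite ℤ M']
    [AddCommGroup L'] [Module ℤ L'] [Module.Free ℤ L'] [Module.Finite ℤ L']
    (BM : M' →ₗ[ℤ] M' →ₗ[ℤ] ℤ) (BL : L' →ₗ[ℤ] L' →ₗ[ℤ] ℤ)
    (hMsymm : ∀ x y, BM x y = BM y x) (hLsymm : ∀ x y, BL x y = BL y x)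
    (hMnd : Function.Injective BM) (hLnd : Function.Injective BL)
    (ρ : M' →ₗ[ℤ] L') (hρ : Function.Injective ρ)
    (hcompat : ∀ x y, BL (ρ x) (ρ y) = BM x y)
    (M : Submodule ℤ M') (hfin : Finite (M' ⧸ M))
    {ι : Type*} [Fintype ι] [DecidableEq ι] (bM : Module.Basis ι ℤ M)
    (hL : ∀ ℓ : ℕ, ℓ.Prime →
      (ℓ : ℤ) ∣ (Matrix.of fun i j => BM (bM i : M') (bM j : M')).det →
      ∃ L : Submodule ℤ L', M.map ρ ≤ L ∧
        ∀ x ∈ M, (∀ y ∈ L, (ℓ : ℤ) ∣ BL (ρ x) y) →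
          ∃ x' ∈ M, x = (ℓ : ℤ) • x') :
    M = ⊤ := by
  by_contra hne
  -- There is a nonzero element of the (finite) quotient.
  haveI : Nontrivial (M' ⧸ M) :=
    (Submodule.Quotient.nontrivial_iff (p := M)).mpr hne
  obtain ⟨q, hq0⟩ := exists_ne (0 : M' ⧸ M)
  have hnpos : 0 < addOrderOf q := addOrderOf_pos q
  have hn1 : addOrderOf q ≠ 1 := by
    intro h
    have h0 := addOrderOf_nsmul_eq_zero q
    rw [h, one_nsmul] at h0
    exact hq0 h0
  obtain ⟨ℓ, hp, hdvdn⟩ := Nat.exists_prime_and_dvd hn1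
  -- an element of order exactly ℓ
  set q' : M' ⧸ M := (addOrderOf q / ℓ) • q with hq'
  have hq'ne : q' ≠ 0 := by
    intro h
    have hdvd : addOrderOf q ∣ addOrderOf q / ℓ := addOrderOf_dvd_of_nsmul_eq_zero h
    have hlt : addOrderOf q / ℓ < addOrderOf q := Nat.div_lt_self hnpos hp.one_lt
    have hpos : 0 < addOrderOf q / ℓ := Nat.div_pos (Nat.le_of_dvd hnpos hdvdn) hp.pos
    exact absurd (Nat.le_of_dvd hpos hdvd) (not_le.mpr hlt)
  have hq'zero : ℓ • q' = 0 := by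
    rw [hq', smul_smul, Nat.mul_div_cancel' hdvdn, addOrderOf_nsmul_eq_zero]
  obtain ⟨x', hx'⟩ := Submodule.Quotient.mk_surjective M q'
  have hx'M : x' ∉ M := by
    intro h
    exact hq'ne (hx' ▸ (Submodule.Quotient.mk_eq_zero M).mpr h)
  have hxM : ℓ • x' ∈ M := by
    have h0 : M.mkQ (ℓ • x') = 0 := by
      rw [map_nsmul, Submodule.mkQ_apply, hx', hq'zero]
    rwa [Submodule.mkQ_apply, Submodule.Quotient.mk_eq_zero] at h0
  have hℓZ : (ℓ : ℤ) ≠ 0 := Int.natCast_ne_zero.mpr hp.ne_zero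
  -- It suffices to find x'' ∈ M with ℓ • x' = ℓ • x''.
  have key : ∀ x'' ∈ M, ℓ • x' = ℓ • x'' → False := by
    intro x'' hxm heq
    rw [← Nat.cast_smul_eq_nsmul ℤ ℓ x', ← Nat.cast_smul_eq_nsmul ℤ ℓ x''] at heq
    have h1 : x' = x'' := smul_right_injective M' hℓZ heq
    exact hx'M (h1.symm ▸ hxm)
  by_cases hdet : (ℓ : ℤ) ∣ (Matrix.of fun i j => BM (bM i : M') (bM j : M')).det
  · -- use the hypothesis hL
    obtain ⟨L, hML, hdiv⟩ := hL ℓ hp hdet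
    obtain ⟨x'', hx''M, hx''⟩ := hdiv (ℓ • x') hxM (by
      intro y hy
      rw [← Nat.cast_smul_eq_nsmul ℤ ℓ x', LinearMap.map_smul, LinearMap.map_smul₂,
        smul_eq_mul]
      exact Dvd.intro _ rfl)
    rw [natCast_zsmul] at hx''
    exact key x'' hx''M hx''
  · -- ℓ does not divide the discriminant: matrix argument mod ℓ
    haveI := Fact.mk hp
    set G : Matrix ι ι ℤ := Matrix.of fun i j => BM (bM i : M') (bM j : M') with hG
    set m : M := ⟨ℓ • x', hxM⟩ with hm
    set c : ι → ℤ := fun i => bM.repr m i with hc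
    have h2 : ∑ i, c i • ((bM i : M')) = ℓ • x' := by
      have h1 := congrArg (M.subtype) (bM.sum_repr m)
      rw [map_sum] at h1
      simpa [LinearMap.map_smul, hc] using h1
    have bridge := fun (n : ℤ) (a : M') => (Int.cast_smul_eq_zsmul ℤ n a).symm
    simp only [bridge, Int.cast_id] at h2
    have hmv : ∀ j, (ℓ : ℤ) ∣ G.mulVec c j := by
      intro j
      have h3 : G.mulVec c j = BM (ℓ • x') (bM j : M') := by
        rw [← h2, map_sum, LinearMap.sum_apply]
        simp only [Matrix.mulVec, dotProduct, hG, Matrix.of_apply,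
          LinearMap.map_smul₂, smul_eq_mul]
        exact Finset.sum_congr rfl fun i _ => by
          rw [mul_comm, hMsymm (bM i : M') (bM j : M')]
      rw [h3, ← Nat.cast_smul_eq_nsmul ℤ ℓ x', LinearMap.map_smul₂, smul_eq_mul]
      exact Dvd.intro _ rfl
    -- pass to ZMod ℓ
    have hdvdc : ∀ i, (ℓ : ℤ) ∣ c i := by
      have hdetb : (G.map (Int.cast : ℤ → ZMod ℓ)).det ≠ 0 := by
        have h6 : ((G.det : ZMod ℓ)) = (G.map (Int.cast : ℤ → ZMod ℓ)).det :=
          RingHom.map_det (Int.castRingHom (ZMod ℓ)) G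
        rw [← h6]
        simpa [ZMod.intCast_zmod_eq_zero_iff_dvd] using hdet
      have hmv0 : (G.map (Int.cast : ℤ → ZMod ℓ)).mulVec (fun i => ((c i : ZMod ℓ))) = 0 := by
        funext j
        have h3 : (G.map (Int.cast : ℤ → ZMod ℓ)).mulVec (fun i => ((c i : ZMod ℓ))) j
            = ((G.mulVec c j : ℤ) : ZMod ℓ) := by
          simp [Matrix.mulVec, dotProduct]
        rw [h3]
        simpa [ZMod.intCast_zmod_eq_zero_iff_dvd] using hmv j
      have h4 := Matrix.eq_zero_of_mulVec_eq_zero hdetb hmv0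
      intro i
      have hi : ((c i : ZMod ℓ)) = 0 := congrFun h4 i
      exact (ZMod.intCast_zmod_eq_zero_iff_dvd _ _).mp hi
    choose d hd using fun i => hdvdc i
    have hmem := Submodule.sum_smul_mem (t := Finset.univ) M d (fun i _ => (bM i).2)
    refine key _ hmem ?_
    rw [← h2, ← Nat.cast_smul_eq_nsmul ℤ, Finset.smul_sum]
    refine Finset.sum_congr rfl fun i _ => ?_
    rw [hd]
    exact @SemigroupAction.mul_smul ℤ M' _ (‹Module ℤ M'›).toMulAction.toSemigroupAction _ _ _
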